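/- arXiv:0909.4453 — 10 statements merged into one kernel-verified Lean document; each statement's English description precedes it below -/
import Mathlib

section
/- Let P be a nonempty subset of X = Σ i, G i. Then the set {(y, z) ∈ X × X | ∃ x ∈ P, δ x (y, z)} equals the Cartesian product P × P if and only if there exists an index i such that P = {⟨i, g⟩ | g ∈ G i}, i.e., P is exactly one fiber of the sigma type. (The classical points of a classical structure in Rel are exactly the parts of its partition.) -/
/-- The comultiplication of the classical structure on `Σ i, G i` determined by the
partition into fibers together with the group structures `G i`:
`⟨i, g⟩` is related to `(⟨j, h⟩, ⟨k, l⟩)` iff `i = j`, `i = k` and `g = h * l`. -/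
def relDelta {ι : Type*} {G : ι → Type*} [∀ i, CommGroup (G i)]
    (x : Σ i, G i) (yz : (Σ i, G i) × (Σ i, G i)) : Prop :=
  ∃ h l : G x.1, yz.1 = ⟨x.1, h⟩ ∧ yz.2 = ⟨x.1, l⟩ ∧ x.2 = h * l

/-- The classical points of a classical structure in `Rel` are exactly the parts of its
partition: a nonempty `P ⊆ Σ i, G i` satisfies `δ ∘ P = P ⊗ P` iff `P` is one fiber. -/
theorem classical_points_are_fibers {ι : Type*} [Fintype ι] [Nonempty ι]
    (G : ι → Type*) [∀ i, Fintype (G i)] [∀ i, CommGroup (G i)]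
    (P : Set (Σ i, G i)) (hP : P.Nonempty) :
    {yz : (Σ i, G i) × (Σ i, G i) | ∃ x ∈ P, relDelta x yz} = P ×ˢ P ↔
      ∃ i₀ : ι, P = {x : Σ i, G i | x.1 = i₀} := by
  constructor
  · intro hEq
    obtain ⟨⟨i₀, g₀⟩, hg₀⟩ := hP
    refine ⟨i₀, Set.eq_of_subset_of_subset ?_ ?_⟩
    · -- P ⊆ fiber i₀ : any two elements of P have equal index
      rintro ⟨j, h⟩ hj
      have : (⟨⟨j, h⟩, ⟨i₀, g₀⟩⟩ : (Σ i, G i) × (Σ i, G i)) ∈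
          {yz : (Σ i, G i) × (Σ i, G i) | ∃ x ∈ P, relDelta x yz} := by
        rw [hEq]; exact ⟨hj, hg₀⟩
      obtain ⟨x, _, a, b, h1, h2, _⟩ := this
      simp only [Sigma.mk.inj_iff] at h1 h2
      exact h1.1.trans h2.1.symm
    · -- fiber i₀ ⊆ P : given ⟨i₀,g₀⟩ ∈ P, all ⟨i₀,h⟩ ∈ P
      rintro ⟨j, h⟩ (hj : j = i₀)
      subst hj
      have : (⟨⟨j, h⟩, ⟨j, h⁻¹ * g₀⟩⟩ : (Σ i, G i) × (Σ i, G i)) ∈ P ×ˢ P := by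
        rw [← hEq]
        exact ⟨⟨j, g₀⟩, hg₀, h, h⁻¹ * g₀, rfl, rfl, by group⟩
      exact this.1
  · rintro ⟨i₀, rfl⟩
    ext ⟨⟨j, h⟩, ⟨k, l⟩⟩
    constructor
    · rintro ⟨x, hx, a, b, h1, h2, _⟩
      simp only [Sigma.mk.inj_iff] at h1 h2
      exact ⟨h1.1.trans hx, h2.1.trans hx⟩
    · rintro ⟨hj : j = i₀, hk : k = i₀⟩
      subst hj; subst hk
      exact ⟨⟨_, h * l⟩, rfl, h, l, rfl, rfl, rfl⟩
end

section
/- Let P be a subset of X = Σ i, G i. Then the relation R on X defined by R x y ⇔ (∃ z ∈ P, δ x (y, z)) is the graph of a bijection X → X if and only if for every index i there is exactly one g ∈ G i with ⟨i, g⟩ ∈ P, i.e., P is a transversal of the fibers. (The unbiased points of a classical structure in Rel are exactly the sets obtained by taking one element from each part of its partition, independently of the chosen group structures.) -/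
/-- The unbiased points of a classical structure in `Rel` are exactly the transversals of
its partition: the relation `Λ(P)`, `x ↦ {y | ∃ z ∈ P, δ x (y, z)}`, is the graph of a
bijection of `Σ i, G i` iff `P` picks exactly one element from each fiber. -/
theorem unbiased_points_are_transversals {ι : Type*} [Fintype ι] [Nonempty ι]
    (G : ι → Type*) [∀ i, Fintype (G i)] [∀ i, CommGroup (G i)]
    (P : Set (Σ i, G i)) :
    (∃ f : (Σ i, G i) → (Σ i, G i), Function.Bijective f ∧
        ∀ x y : Σ i, G i, (∃ z ∈ P, relDelta x (y, z)) ↔ f x = y) ↔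
      ∀ i : ι, ∃! g : G i, (⟨i, g⟩ : Σ i, G i) ∈ P := by
  constructor
  · rintro ⟨f, -, hf⟩ i
    -- existence: apply hf at x = ⟨i,1⟩, y = f ⟨i,1⟩
    obtain ⟨z, hzP, h, l, hy, hz, hmul⟩ := (hf ⟨i, 1⟩ (f ⟨i, 1⟩)).2 rfl
    replace hz : z = ⟨i, l⟩ := hz
    subst hz
    refine ⟨l, hzP, ?_⟩
    intro l' hl'
    -- f ⟨i, l⟩ = ⟨i, 1⟩ using z = ⟨i, l⟩ and also = ⟨i, l*l'⁻¹⟩ using z = ⟨i, l'⟩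
    have h1 : f ⟨i, l⟩ = ⟨i, 1⟩ := by
      refine (hf ⟨i, l⟩ ⟨i, 1⟩).1 ⟨⟨i, l⟩, hzP, 1, l, rfl, rfl, (one_mul l).symm⟩
    have h2 : f ⟨i, l⟩ = ⟨i, l * l'⁻¹⟩ := by
      refine (hf ⟨i, l⟩ ⟨i, l * l'⁻¹⟩).1 ⟨⟨i, l'⟩, hl', l * l'⁻¹, l', rfl, rfl, by group⟩
    rw [h1] at h2
    have := (Sigma.mk.inj_iff.1 h2).2
    have h3 : (1 : G i) = l * l'⁻¹ := eq_of_heq this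
    have : l' = l := by
      have := mul_eq_one_iff_eq_inv.1 h3.symm
      simpa using this.symm
    exact this
  · intro hP
    choose g hgP hguniq using hP
    refine ⟨fun x => ⟨x.1, x.2 * (g x.1)⁻¹⟩, ?_, ?_⟩
    · constructor
      · rintro ⟨i, a⟩ ⟨j, b⟩ h
        obtain ⟨h1, h2⟩ := Sigma.mk.inj_iff.1 h
        subst h1
        have := eq_of_heq h2
        simp only [mul_left_inj] at this
        rw [this]
      · rintro ⟨i, a⟩
        exact ⟨⟨i, a * g i⟩, by simp⟩
    · rintro ⟨i, a⟩ y
      constructor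
      · rintro ⟨z, hzP, h, l, hy, hz, hmul⟩
        replace hz : z = ⟨i, l⟩ := hz
        subst hz
        have : l = g i := hguniq i l hzP
        subst this
        replace hy : y = ⟨i, h⟩ := hy
        rw [hy]
        simp only [Sigma.mk.inj_iff, heq_eq_eq, true_and]
        replace hmul : a = h * g i := hmul
        rw [hmul]; group
      · rintro rfl
        exact ⟨⟨i, g i⟩, hgP i, a * (g i)⁻¹, g i, rfl, rfl, by group⟩
end

section
/- Let X be a finite nonempty set and let π be a uniform partition of X. Then there exists a partition τ of X that is complementary to π. (Consequently, every classical structure in Rel whose partition is uniform has a complementary classical structure, obtained via the transpose partition.) -/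
/-- `π` is a partition of `X`: a collection of nonempty pairwise disjoint subsets of `X`
whose union is all of `X`. -/
def IsPartition {X : Type*} (π : Set (Set X)) : Prop :=
  (∀ S ∈ π, S.Nonempty) ∧ (∀ S ∈ π, ∀ T ∈ π, S ≠ T → Disjoint S T) ∧ ⋃₀ π = Set.univ

/-- Two partitions are complementary if every part of one meets every part of the other
in exactly one element. -/
def Complementary {X : Type*} (π τ : Set (Set X)) : Prop :=
  ∀ S ∈ π, ∀ T ∈ τ, ∃! x, x ∈ S ∩ T

/-- Every uniform partition of a finite nonempty set has a complementary partition
(obtained via the transpose partition); hence every classical structure in `Rel` whose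
partition is uniform has a complementary classical structure. -/
theorem uniform_partition_has_complementary {X : Type*} [Fintype X] [Nonempty X]
    (π : Set (Set X)) (hπ : IsPartition π)
    (huniform : ∀ S ∈ π, ∀ T ∈ π, S.ncard = T.ncard) :
    ∃ τ : Set (Set X), IsPartition τ ∧ Complementary π τ := by
  classical
  obtain ⟨hne, hdisj, hcover⟩ := hπ
  obtain ⟨x₀⟩ := ‹Nonempty X›
  have hx₀ : x₀ ∈ ⋃₀ π := by rw [hcover]; trivial
  obtain ⟨S₀, hS₀, hx₀S₀⟩ := hx₀
  set n := S₀.ncard with hn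
  have hcard : ∀ s : π, Fintype.card s = n := by
    rintro ⟨S, hS⟩
    have h := huniform S hS S₀ hS₀
    rw [hn, ← h, Set.ncard_eq_toFinset_card', Set.toFinset_card]
  have e : ∀ s : π, (s : Set X) ≃ Fin n := fun s => Fintype.equivFinOfCardEq (hcard s)
  have hpart : ∀ x : X, ∃ s : π, x ∈ (s : Set X) := by
    intro x
    have : x ∈ ⋃₀ π := by rw [hcover]; trivial
    obtain ⟨S, hS, hxS⟩ := this
    exact ⟨⟨S, hS⟩, hxS⟩
  choose p hp using hpart
  have hpuniq : ∀ (x : X) (s : π), x ∈ (s : Set X) → p x = s := by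
    intro x s hxs
    by_contra h
    have hd := hdisj (p x) (p x).2 s s.2 (fun he => h (Subtype.ext he))
    exact (Set.disjoint_left.mp hd (hp x)) hxs
  set idx : X → Fin n := fun x => e (p x) ⟨x, hp x⟩ with hidx
  have key : ∀ (s : π) (x : X) (hx : x ∈ (s : Set X)), idx x = e s ⟨x, hx⟩ := by
    intro s x hx
    have h := hpuniq x s hx
    subst h
    rfl
  set T : Fin n → Set X := fun i => {x | idx x = i} with hT
  refine ⟨Set.range T, ⟨?_, ?_, ?_⟩, ?_⟩
  · rintro _ ⟨i, rfl⟩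
    refine ⟨(e ⟨S₀, hS₀⟩).symm i, ?_⟩
    show idx _ = i
    rw [key ⟨S₀, hS₀⟩ _ ((e ⟨S₀, hS₀⟩).symm i).2]
    simp
  · rintro _ ⟨i, rfl⟩ _ ⟨j, rfl⟩ hij
    refine Set.disjoint_left.mpr ?_
    intro x hxi hxj
    exact hij (by rw [show i = idx x from hxi.symm, show idx x = j from hxj])
  · ext x
    simp only [Set.mem_sUnion, Set.mem_univ, iff_true]
    exact ⟨T (idx x), ⟨idx x, rfl⟩, rfl⟩
  · rintro S hS _ ⟨i, rfl⟩
    refine ⟨(e ⟨S, hS⟩).symm i, ⟨((e ⟨S, hS⟩).symm i).2, ?_⟩, ?_⟩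
    · show idx _ = i
      rw [key ⟨S, hS⟩ _ ((e ⟨S, hS⟩).symm i).2]
      simp
    · rintro y ⟨hyS, hyT⟩
      have h1 : e ⟨S, hS⟩ ⟨y, hyS⟩ = i := by
        rw [← key ⟨S, hS⟩ y hyS]; exact hyT
      have h2 := congrArg (e ⟨S, hS⟩).symm h1
      simp only [Equiv.symm_apply_apply] at h2
      exact congrArg Subtype.val h2
end

section
/- Let X be a finite set and let π and τ be complementary partitions of X. Then every part of π has cardinality equal to the number of parts of τ; in particular π is uniform (and symmetrically every part of τ has cardinality equal to the number of parts of π, so τ is uniform). Consequently, a classical structure in Rel whose partition is not uniform has no complementary classical structure. -/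
lemma aux_uniform {X : Type*} [Fintype X]
    (π τ : Set (Set X)) (hτ : IsPartition τ)
    (hcomp : Complementary π τ) : ∀ S ∈ π, S.ncard = τ.ncard := by
  intro S hS
  obtain ⟨-, hdisj, hcover⟩ := hτ
  have hmem : ∀ x : X, ∃ T, T ∈ τ ∧ x ∈ T := by
    intro x
    have : x ∈ ⋃₀ τ := hcover ▸ Set.mem_univ x
    simpa using this
  choose F hF1 hF2 using hmem
  let f : S → τ := fun x => ⟨F x, hF1 x⟩
  have hbij : Function.Bijective f := by
    constructor
    · rintro ⟨x, hx⟩ ⟨y, hy⟩ hxy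
      have hFeq : F x = F y := congrArg Subtype.val hxy
      obtain ⟨z, -, huniq⟩ := hcomp S hS (F x) (hF1 x)
      have hxz : x = z := huniq x ⟨hx, hF2 x⟩
      have hyz : y = z := huniq y ⟨hy, hFeq ▸ hF2 y⟩
      exact Subtype.ext (hxz.trans hyz.symm)
    · rintro ⟨T, hT⟩
      obtain ⟨x, hx, -⟩ := hcomp S hS T hT
      refine ⟨⟨x, hx.1⟩, ?_⟩
      have : F x = T := by
        by_contra hne
        exact (hdisj (F x) (hF1 x) T hT hne).ne_of_mem (hF2 x) hx.2 rfl
      exact Subtype.ext this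
  rw [← Nat.card_coe_set_eq, ← Nat.card_coe_set_eq]
  exact Nat.card_congr (Equiv.ofBijective f hbij)

/-- If `π` and `τ` are complementary partitions of a finite set, then every part of `π`
has cardinality equal to the number of parts of `τ` (so `π` is uniform), and symmetrically
every part of `τ` has cardinality equal to the number of parts of `π` (so `τ` is uniform).
Consequently a classical structure in `Rel` whose partition is not uniform has no
complementary classical structure. -/
theorem complementary_partitions_uniform {X : Type*} [Fintype X]
    (π τ : Set (Set X)) (hπ : IsPartition π) (hτ : IsPartition τ)
    (hcomp : Complementary π τ) :
    (∀ S ∈ π, S.ncard = τ.ncard) ∧ (∀ T ∈ τ, T.ncard = π.ncard) := by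
  refine ⟨aux_uniform π τ hτ hcomp, aux_uniform τ π hπ ?_⟩
  intro T hT S hS
  simpa [Set.inter_comm] using hcomp S hS T hT
end

section
/- Let X be a finite nonempty set and let π₁, π₂, π₃ be partitions of X that are pairwise complementary. Then each partition πᵢ is square: the number of parts of πᵢ equals the common cardinality of its parts; moreover, writing d for this common number, |X| = d². (A classical structure in Rel whose partition is not square cannot belong to a family of three or more mutually complementary classical structures.) -/
lemma Complementary.symm' {X : Type*} {π τ : Set (Set X)} (c : Complementary π τ) :
    Complementary τ π := by
  intro T hT S hS
  obtain ⟨x, hx, hu⟩ := c S hS T hT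
  exact ⟨x, ⟨hx.2, hx.1⟩, fun y hy => hu y ⟨hy.2, hy.1⟩⟩

lemma part_existsUnique {X : Type*} {π : Set (Set X)} (h : IsPartition π) (x : X) :
    ∃! S, S ∈ π ∧ x ∈ S := by
  obtain ⟨hne, hdisj, hcov⟩ := h
  have hx : x ∈ ⋃₀ π := hcov ▸ Set.mem_univ x
  obtain ⟨S, hS, hxS⟩ := hx
  refine ⟨S, ⟨hS, hxS⟩, ?_⟩
  rintro T ⟨hT, hxT⟩
  by_contra hne'
  exact Set.disjoint_left.1 (hdisj T hT S hS hne') hxT hxS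

noncomputable def partOf {X : Type*} {π : Set (Set X)} (h : IsPartition π) (x : X) : π :=
  ⟨(part_existsUnique h x).exists.choose, (part_existsUnique h x).exists.choose_spec.1⟩

lemma mem_partOf {X : Type*} {π : Set (Set X)} (h : IsPartition π) (x : X) :
    x ∈ (partOf h x : Set X) := (part_existsUnique h x).exists.choose_spec.2

lemma partOf_eq {X : Type*} {π : Set (Set X)} (h : IsPartition π) {x : X} {S : Set X}
    (hS : S ∈ π) (hx : x ∈ S) : (partOf h x : Set X) = S :=
  (part_existsUnique h x).unique ⟨(partOf h x).2, mem_partOf h x⟩ ⟨hS, hx⟩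

lemma card_eq_mul {X : Type*} [Fintype X] {π τ : Set (Set X)}
    (hπ : IsPartition π) (hτ : IsPartition τ) (c : Complementary π τ) :
    Fintype.card X = π.ncard * τ.ncard := by
  have hb : Function.Bijective (fun x : X => (partOf hπ x, partOf hτ x)) := by
    constructor
    · intro x y hxy
      have h1 : (partOf hπ x : Set X) = (partOf hπ y : Set X) :=
        congrArg (fun p : π × τ => (p.1 : Set X)) hxy
      have h2 : (partOf hτ x : Set X) = (partOf hτ y : Set X) :=
        congrArg (fun p : π × τ => (p.2 : Set X)) hxy
      obtain ⟨z, hz, hu⟩ := c _ (partOf hπ x).2 _ (partOf hτ x).2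
      have hx := hu x ⟨mem_partOf hπ x, mem_partOf hτ x⟩
      have hy := hu y ⟨h1 ▸ mem_partOf hπ y, h2 ▸ mem_partOf hτ y⟩
      rw [hx, hy]
    · rintro ⟨⟨S, hS⟩, ⟨T, hT⟩⟩
      obtain ⟨x, hx, -⟩ := c S hS T hT
      refine ⟨x, ?_⟩
      simp only [Prod.mk.injEq, Subtype.ext_iff]
      exact ⟨partOf_eq hπ hS hx.1, partOf_eq hτ hT hx.2⟩
  have := Nat.card_congr (Equiv.ofBijective _ hb)
  simpa [Nat.card_eq_fintype_card, Nat.card_coe_set_eq] using this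

lemma part_ncard {X : Type*} [Fintype X] {π τ : Set (Set X)}
    (hτ : IsPartition τ) (c : Complementary π τ) {S : Set X} (hS : S ∈ π) :
    S.ncard = τ.ncard := by
  have hb : Function.Bijective (fun x : S => partOf hτ (x : X)) := by
    constructor
    · intro x y hxy
      have h2 : (partOf hτ (x : X) : Set X) = (partOf hτ (y : X) : Set X) :=
        congrArg Subtype.val hxy
      obtain ⟨z, hz, hu⟩ := c S hS _ (partOf hτ (x : X)).2
      have hx := hu x ⟨x.2, mem_partOf hτ x⟩
      have hy := hu y ⟨y.2, h2 ▸ mem_partOf hτ y⟩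
      exact Subtype.ext (hx.trans hy.symm)
    · rintro ⟨T, hT⟩
      obtain ⟨x, hx, -⟩ := c S hS T hT
      exact ⟨⟨x, hx.1⟩, Subtype.ext (partOf_eq hτ hT hx.2)⟩
  have := Nat.card_congr (Equiv.ofBijective _ hb)
  simpa [Nat.card_coe_set_eq] using this

/-- If `π₁, π₂, π₃` are pairwise complementary partitions of a finite nonempty set `X`,
then each `πᵢ` is square (its number of parts equals the common cardinality `d` of its
parts) and `|X| = d²`.  Hence a classical structure in `Rel` whose partition is not
square cannot belong to a family of three or more mutually complementary classical
structures. -/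
theorem three_mutually_complementary_partitions_square {X : Type*} [Fintype X] [Nonempty X]
    (π₁ π₂ π₃ : Set (Set X))
    (h₁ : IsPartition π₁) (h₂ : IsPartition π₂) (h₃ : IsPartition π₃)
    (c₁₂ : Complementary π₁ π₂) (c₁₃ : Complementary π₁ π₃) (c₂₃ : Complementary π₂ π₃) :
    ∃ d : ℕ, Fintype.card X = d ^ 2 ∧
      ∀ π ∈ ({π₁, π₂, π₃} : Set (Set (Set X))),
        π.ncard = d ∧ ∀ S ∈ π, S.ncard = d := by
  obtain ⟨x₀⟩ := ‹Nonempty X›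
  have hS₁ := (partOf h₁ x₀).2
  have hS₂ := (partOf h₂ x₀).2
  have hS₃ := (partOf h₃ x₀).2
  have e23 : π₂.ncard = π₃.ncard :=
    (part_ncard h₂ c₁₂ hS₁).symm.trans (part_ncard h₃ c₁₃ hS₁)
  have e13 : π₁.ncard = π₃.ncard :=
    (part_ncard h₁ c₁₂.symm' hS₂).symm.trans (part_ncard h₃ c₂₃ hS₂)
  set d := π₁.ncard with hd
  have e12 : π₂.ncard = d := e23.trans e13.symm
  refine ⟨d, ?_, ?_⟩
  · rw [card_eq_mul h₁ h₂ c₁₂, e12, sq]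
  · rintro π (rfl | rfl | rfl)
    · exact ⟨rfl, fun S hS => (part_ncard h₂ c₁₂ hS).trans e12⟩
    · exact ⟨e12, fun S hS => (part_ncard h₃ c₂₃ hS).trans e13.symm⟩
    · exact ⟨e13.symm, fun S hS => part_ncard h₁ c₁₃.symm' hS⟩
end

section
/- Let k ≥ 2 and let π₁, …, π_k be partitions of a finite set X that are pairwise complementary (πᵢ and πⱼ are complementary whenever i ≠ j), and suppose π₁ has exactly d parts. Then there exist k − 2 pairwise orthogonal Latin squares of order d. -/
/-- A Latin square of order `d`: every row and every column is a bijection. -/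
def IsLatinSquare {d : ℕ} (L : Fin d → Fin d → Fin d) : Prop :=
  (∀ i, Function.Bijective fun j => L i j) ∧ (∀ j, Function.Bijective fun i => L i j)

/-- Two Latin squares of order `d` are orthogonal if the map
`(i, j) ↦ (L i j, L' i j)` is injective. -/
def OrthogonalLS {d : ℕ} (L L' : Fin d → Fin d → Fin d) : Prop :=
  Function.Injective fun p : Fin d × Fin d => (L p.1 p.2, L' p.1 p.2)

set_option maxHeartbeats 1000000 in
/-- From `k ≥ 2` pairwise complementary partitions of a finite set, the first having `d`
parts, one can construct `k - 2` mutually orthogonal Latin squares of order `d`. -/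
theorem mols_of_mutually_complementary_partitions {X : Type*} [Fintype X] {k d : ℕ}
    (hk : 2 ≤ k) (π : Fin k → Set (Set X))
    (hpart : ∀ i, IsPartition (π i))
    (hcomp : ∀ i j, i ≠ j → Complementary (π i) (π j))
    (hd : (π ⟨0, by omega⟩).ncard = d) :
    ∃ L : Fin (k - 2) → Fin d → Fin d → Fin d,
      (∀ i, IsLatinSquare (L i)) ∧ ∀ i j, i ≠ j → OrthogonalLS (L i) (L j) := by
  classical
  rcases eq_or_lt_of_le hk with hk2 | hk3
  · exact ⟨fun m => absurd m.2 (by omega), fun m => absurd m.2 (by omega),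
      fun m _ _ => absurd m.2 (by omega)⟩
  rcases Nat.eq_zero_or_pos d with hd0 | hdpos
  · subst hd0
    refine ⟨fun _ i _ => i, fun m => ⟨fun i => i.elim0, fun j => j.elim0⟩,
      fun m m' _ p => p.1.elim0⟩
  -- part functions
  have hpm : ∀ (a : Fin k) (x : X), ∃! S, S ∈ π a ∧ x ∈ S := by
    intro a x
    obtain ⟨h1, h2, h3⟩ := hpart a
    have hx : x ∈ ⋃₀ π a := h3 ▸ Set.mem_univ x
    obtain ⟨S, hS, hxS⟩ := hx
    refine ⟨S, ⟨hS, hxS⟩, ?_⟩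
    rintro T ⟨hT, hxT⟩
    by_contra hne
    exact Set.disjoint_left.mp (h2 T hT S hS hne) hxT hxS
  choose P hP using hpm
  have hPmem : ∀ a x, P a x ∈ π a := fun a x => (hP a x).1.1
  have hPx : ∀ a x, x ∈ P a x := fun a x => (hP a x).1.2
  have hPeq : ∀ a x S, S ∈ π a → x ∈ S → P a x = S :=
    fun a x S hS hx => ((hP a x).2 S ⟨hS, hx⟩).symm
  set f : ∀ a : Fin k, X → ↥(π a) := fun a x => ⟨P a x, hPmem a x⟩ with hf
  -- the key bijection
  have key : ∀ a b : Fin k, a ≠ b →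
      Function.Bijective (fun x : X => (f a x, f b x)) := by
    intro a b hab
    constructor
    · intro x y hxy
      simp only [hf, Prod.mk.injEq, Subtype.mk.injEq] at hxy
      obtain ⟨z, _, hz⟩ := hcomp a b hab (P a x) (hPmem a x) (P b x) (hPmem b x)
      have hx' : x = z := hz x ⟨hPx a x, hPx b x⟩
      have hy' : y = z := hz y ⟨hxy.1 ▸ hPx a y, hxy.2 ▸ hPx b y⟩
      exact hx'.trans hy'.symm
    · rintro ⟨⟨S, hS⟩, ⟨T, hT⟩⟩
      obtain ⟨z, ⟨hzS, hzT⟩, -⟩ := hcomp a b hab S hS T hT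
      refine ⟨z, ?_⟩
      simp only [hf, Prod.mk.injEq, Subtype.mk.injEq]
      exact ⟨hPeq a z S hS hzS, hPeq b z T hT hzT⟩
  have hcard : ∀ a b : Fin k, a ≠ b →
      Nat.card X = Nat.card ↥(π a) * Nat.card ↥(π b) := by
    intro a b hab
    rw [Nat.card_congr (Equiv.ofBijective _ (key a b hab)), Nat.card_prod]
  set i0 : Fin k := ⟨0, by omega⟩ with hi0
  set i1 : Fin k := ⟨1, by omega⟩ with hi1
  set i2 : Fin k := ⟨2, by omega⟩ with hi2
  have hc0 : Nat.card ↥(π i0) = d := by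
    rw [Nat.card_coe_set_eq]; exact hd
  -- X is nonempty
  have hne0 : Nonempty ↥(π i0) := by
    have := hc0 ▸ hdpos
    exact (Nat.card_pos_iff.mp this).1
  obtain ⟨S0, hS0⟩ := hne0
  obtain ⟨x0, -⟩ := (hpart i0).1 S0 hS0
  have hXpos : 0 < Nat.card X := Nat.card_pos_iff.mpr ⟨⟨x0⟩, inferInstance⟩
  -- all partitions have d parts
  have hcall : ∀ a : Fin k, Nat.card ↥(π a) = d := by
    intro a
    by_cases ha : a = i0
    · rw [ha]; exact hc0
    · set b : Fin k := if a = i1 then i2 else i1 with hb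
      have hb0 : b ≠ i0 := by
        rw [hb]; split_ifs <;> simp [hi0, hi1, hi2, Fin.ext_iff]
      have hba : b ≠ a := by
        rw [hb]; split_ifs with h
        · rw [h]; simp [hi1, hi2, Fin.ext_iff]
        · exact fun hh => h hh.symm
      have h1 := hcard i0 b (Ne.symm hb0)
      have h2 := hcard a b hba.symm
      rw [hc0] at h1
      have hcb : Nat.card ↥(π b) ≠ 0 := by
        intro h; rw [h, mul_zero] at h1; omega
      have := h1.symm.trans h2
      exact Nat.eq_of_mul_eq_mul_right (Nat.pos_of_ne_zero hcb) this.symm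
  haveI : ∀ a : Fin k, Fintype ↥(π a) := fun a => Fintype.ofFinite _
  have e : ∀ a : Fin k, Fin d ≃ ↥(π a) := fun a =>
    (Fintype.equivFinOfCardEq (by rw [← Nat.card_eq_fintype_card, hcall a])).symm
  have h01 : i0 ≠ i1 := by simp [hi0, hi1, Fin.ext_iff]
  obtain ⟨G, hG⟩ : ∃ G : X ≃ ↥(π i0) × ↥(π i1), ∀ x, G x = (f i0 x, f i1 x) :=
    ⟨Equiv.ofBijective _ (key i0 i1 h01), fun _ => rfl⟩
  have hGsymm : ∀ p : ↥(π i0) × ↥(π i1),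
      (f i0 (G.symm p), f i1 (G.symm p)) = p :=
    fun p => (hG _).symm.trans (G.apply_symm_apply p)
  set idx : Fin (k - 2) → Fin k := fun m => ⟨m.1 + 2, by omega⟩ with hidx
  have hidx0 : ∀ m, i0 ≠ idx m := by
    intro m h
    have := congrArg Fin.val h
    simp only [hi0, hidx] at this
    omega
  have hidx1 : ∀ m, i1 ≠ idx m := by
    intro m h
    have := congrArg Fin.val h
    simp only [hi1, hidx] at this
    omega
  have hidxinj : ∀ m m' : Fin (k - 2), m ≠ m' → idx m ≠ idx m' := by
    intro m m' h hh
    have := congrArg Fin.val hh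
    simp only [hidx] at this
    exact h (Fin.ext (by omega))
  refine ⟨fun m i j => (e (idx m)).symm (f (idx m) (G.symm (e i0 i, e i1 j))), ?_, ?_⟩
  · -- Latin squares
    intro m
    constructor
    · -- rows
      intro i
      constructor
      · intro j j' h
        have h2 : f (idx m) (G.symm (e i0 i, e i1 j))
            = f (idx m) (G.symm (e i0 i, e i1 j')) := (e (idx m)).symm.injective h
        have h0 : f i0 (G.symm ((e i0 i, e i1 j) : ↥(π i0) × ↥(π i1)))
            = f i0 (G.symm (e i0 i, e i1 j')) := by
          rw [(Prod.mk.injEq _ _ _ _).mp (hGsymm (e i0 i, e i1 j)) |>.1,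
              (Prod.mk.injEq _ _ _ _).mp (hGsymm (e i0 i, e i1 j')) |>.1]
        have hxx : G.symm (e i0 i, e i1 j) = G.symm (e i0 i, e i1 j') :=
          (key i0 (idx m) (hidx0 m)).injective (by rw [Prod.mk.injEq]; exact ⟨h0, h2⟩)
        have := G.symm.injective hxx
        rw [Prod.mk.injEq] at this
        exact (e i1).injective this.2
      · intro c
        obtain ⟨x, hx⟩ := (key i0 (idx m) (hidx0 m)).surjective (e i0 i, e (idx m) c)
        rw [Prod.mk.injEq] at hx
        refine ⟨(e i1).symm (f i1 x), ?_⟩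
        have hxeq : G.symm (e i0 i, e i1 ((e i1).symm (f i1 x))) = x := by
          rw [(e i1).apply_symm_apply, ← hx.1, ← hG x, G.symm_apply_apply]
        simp only [hxeq, hx.2, Equiv.symm_apply_apply]
    · -- columns
      intro j
      constructor
      · intro i i' h
        have h2 : f (idx m) (G.symm (e i0 i, e i1 j))
            = f (idx m) (G.symm (e i0 i', e i1 j)) := (e (idx m)).symm.injective h
        have h1' : f i1 (G.symm ((e i0 i, e i1 j) : ↥(π i0) × ↥(π i1)))
            = f i1 (G.symm (e i0 i', e i1 j)) := by
          rw [(Prod.mk.injEq _ _ _ _).mp (hGsymm (e i0 i, e i1 j)) |>.2,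
              (Prod.mk.injEq _ _ _ _).mp (hGsymm (e i0 i', e i1 j)) |>.2]
        have hxx : G.symm (e i0 i, e i1 j) = G.symm (e i0 i', e i1 j) :=
          (key i1 (idx m) (hidx1 m)).injective (by rw [Prod.mk.injEq]; exact ⟨h1', h2⟩)
        have := G.symm.injective hxx
        rw [Prod.mk.injEq] at this
        exact (e i0).injective this.1
      · intro c
        obtain ⟨x, hx⟩ := (key i1 (idx m) (hidx1 m)).surjective (e i1 j, e (idx m) c)
        rw [Prod.mk.injEq] at hx
        refine ⟨(e i0).symm (f i0 x), ?_⟩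
        have hxeq : G.symm (e i0 ((e i0).symm (f i0 x)), e i1 j) = x := by
          rw [(e i0).apply_symm_apply, ← hx.1, ← hG x, G.symm_apply_apply]
        simp only [hxeq, hx.2, Equiv.symm_apply_apply]
  · -- orthogonality
    intro m m' hmm p q h
    simp only [Prod.mk.injEq] at h
    have hA : f (idx m) (G.symm (e i0 p.1, e i1 p.2))
        = f (idx m) (G.symm (e i0 q.1, e i1 q.2)) := (e (idx m)).symm.injective h.1
    have hB : f (idx m') (G.symm (e i0 p.1, e i1 p.2))
        = f (idx m') (G.symm (e i0 q.1, e i1 q.2)) := (e (idx m')).symm.injective h.2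
    have hxx : G.symm (e i0 p.1, e i1 p.2) = G.symm (e i0 q.1, e i1 q.2) :=
      (key (idx m) (idx m') (hidxinj m m' hmm)).injective
        (by rw [Prod.mk.injEq]; exact ⟨hA, hB⟩)
    have := G.symm.injective hxx
    rw [Prod.mk.injEq] at this
    exact Prod.ext ((e i0).injective this.1) ((e i1).injective this.2)
end

section
/- Let d ≥ 2 and let π₁, …, π_k be partitions of a set with d² elements that are pairwise complementary (πᵢ and πⱼ are complementary whenever i ≠ j). Then k ≤ d + 1. (There are at most d + 1 mutually complementary classical structures on a set with d² elements in Rel.) -/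
section helpers
variable {X : Type*}

lemma exists_mem_part {π : Set (Set X)} (h : IsPartition π) (y : X) :
    ∃ S ∈ π, y ∈ S := by
  have hy : y ∈ ⋃₀ π := by rw [h.2.2]; trivial
  simpa using hy

lemma part_eq {π : Set (Set X)} (h : IsPartition π) {S T : Set X} (hS : S ∈ π) (hT : T ∈ π)
    {y : X} (hyS : y ∈ S) (hyT : y ∈ T) : S = T := by
  by_contra hne
  exact Set.disjoint_left.mp (h.2.1 S hS T hT hne) hyS hyT

/-- a part of `π` has as many elements as `τ` has parts. -/
lemma card_part_eq {π τ : Set (Set X)} (hτ : IsPartition τ)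
    (hc : Complementary π τ) {S : Set X} (hS : S ∈ π) : S.ncard = τ.ncard := by
  have hch : ∀ T : τ, (hc S hS T.1 T.2).choose ∈ S ∩ T.1 :=
    fun T => (hc S hS T.1 T.2).choose_spec.1
  set f : τ → X := fun T => (hc S hS T.1 T.2).choose with hf
  have hinj : Function.Injective f := by
    intro T T' hTT'
    apply Subtype.ext
    refine part_eq hτ T.2 T'.2 (hch T).2 ?_
    show f T ∈ (T' : Set X)
    rw [hTT']; exact (hch T').2
  have hrange : Set.range f = S := by
    ext y
    constructor
    · rintro ⟨T, rfl⟩; exact (hch T).1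
    · intro hy
      obtain ⟨T, hT, hyT⟩ := exists_mem_part hτ y
      refine ⟨⟨T, hT⟩, ?_⟩
      exact ((hc S hS T hT).choose_spec.2 y ⟨hy, hyT⟩).symm
  calc S.ncard = (Set.range f).ncard := by rw [hrange]
    _ = Nat.card (Set.range f) := (Nat.card_coe_set_eq _).symm
    _ = Nat.card τ := Nat.card_range_of_injective hinj
    _ = τ.ncard := Nat.card_coe_set_eq _

/-- complementary partitions: product of numbers of parts equals `Nat.card X`. -/
lemma card_mul_card {π τ : Set (Set X)} (hπ : IsPartition π) (hτ : IsPartition τ)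
    (hc : Complementary π τ) : π.ncard * τ.ncard = Nat.card X := by
  set p : X → π × τ := fun y =>
    (⟨(exists_mem_part hπ y).choose, (exists_mem_part hπ y).choose_spec.1⟩,
     ⟨(exists_mem_part hτ y).choose, (exists_mem_part hτ y).choose_spec.1⟩) with hp
  have hmem : ∀ y, y ∈ (p y).1.1 ∧ y ∈ (p y).2.1 :=
    fun y => ⟨(exists_mem_part hπ y).choose_spec.2, (exists_mem_part hτ y).choose_spec.2⟩
  have hbij : Function.Bijective p := by
    constructor
    · intro y z hyz
      have h1 := hmem y
      have h2 := hmem z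
      rw [hyz] at h1
      have := hc _ (p z).1.2 _ (p z).2.2
      exact (this.choose_spec.2 y ⟨h1.1, h1.2⟩).trans (this.choose_spec.2 z ⟨h2.1, h2.2⟩).symm
    · rintro ⟨⟨S, hS⟩, ⟨T, hT⟩⟩
      obtain ⟨y, hy, -⟩ := hc S hS T hT
      refine ⟨y, ?_⟩
      have h1 : (p y).1.1 = S := part_eq hπ (p y).1.2 hS (hmem y).1 hy.1
      have h2 : (p y).2.1 = T := part_eq hτ (p y).2.2 hT (hmem y).2 hy.2
      exact Prod.ext (Subtype.ext h1) (Subtype.ext h2)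
  calc π.ncard * τ.ncard = Nat.card π * Nat.card τ := by
        rw [Nat.card_coe_set_eq, Nat.card_coe_set_eq]
    _ = Nat.card (π × τ) := (Nat.card_prod _ _).symm
    _ = Nat.card X := (Nat.card_eq_of_bijective p hbij).symm

end helpers

/-- There are at most `d + 1` mutually complementary partitions (equivalently, mutually
complementary classical structures in `Rel`) on a set with `d²` elements, for `d ≥ 2`. -/
theorem mutually_complementary_partitions_le {d k : ℕ} (hd : 2 ≤ d)
    {X : Type*} [Fintype X] (hX : Fintype.card X = d ^ 2)
    (π : Fin k → Set (Set X))
    (hpart : ∀ i, IsPartition (π i))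
    (hcomp : ∀ i j, i ≠ j → Complementary (π i) (π j)) :
    k ≤ d + 1 := by
  classical
  rcases le_or_gt k 3 with hk | hk
  · omega
  -- k ≥ 4
  have hcardX : Nat.card X = d ^ 2 := by rw [Nat.card_eq_fintype_card, hX]
  have hmul : ∀ i j : Fin k, i ≠ j → (π i).ncard * (π j).ncard = d ^ 2 := by
    intro i j hij
    rw [card_mul_card (hpart i) (hpart j) (hcomp i j hij), hcardX]
  -- pick two distinct other indices
  have hpick : ∀ i : Fin k, ∃ a b : Fin k, a ≠ b ∧ a ≠ i ∧ b ≠ i := by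
    intro i
    by_cases h0 : i = ⟨0, by omega⟩
    · exact ⟨⟨1, by omega⟩, ⟨2, by omega⟩, by simp [Fin.ext_iff, h0], by simp [Fin.ext_iff, h0],
        by simp [Fin.ext_iff, h0]⟩
    · by_cases h1 : i = ⟨1, by omega⟩
      · exact ⟨⟨0, by omega⟩, ⟨2, by omega⟩, by simp [Fin.ext_iff, h1], by simp [Fin.ext_iff, h1],
          by simp [Fin.ext_iff, h1]⟩
      · exact ⟨⟨0, by omega⟩, ⟨1, by omega⟩, by simp [Fin.ext_iff],
          fun h => h0 h.symm, fun h => h1 h.symm⟩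
  have hn : ∀ i : Fin k, (π i).ncard = d := by
    intro i
    obtain ⟨a, b, hab, hai, hbi⟩ := hpick i
    have h1 := hmul i a (Ne.symm hai)
    have h2 := hmul i b (Ne.symm hbi)
    have h3 := hmul a b hab
    have key : (π i).ncard ^ 2 * d ^ 2 = d ^ 2 * d ^ 2 := by
      calc (π i).ncard ^ 2 * d ^ 2 = ((π i).ncard * (π a).ncard) * ((π i).ncard * (π b).ncard) := by
            rw [← h3]; ring
        _ = d ^ 2 * d ^ 2 := by rw [h1, h2]
    have hd2 : 0 < d ^ 2 := by positivity
    have : (π i).ncard ^ 2 = d ^ 2 := Nat.eq_of_mul_eq_mul_right hd2 key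
    exact Nat.pow_left_injective (by norm_num) this
  -- pick a point x
  have hne : Nonempty X := by
    rw [← Fintype.card_pos_iff, hX]; positivity
  obtain ⟨x⟩ := hne
  -- the part of π i containing x
  have hSx := fun i => exists_mem_part (hpart i) x
  set S : Fin k → Set X := fun i => (hSx i).choose with hS
  have hSmem : ∀ i, S i ∈ π i := fun i => (hSx i).choose_spec.1
  have hxS : ∀ i, x ∈ S i := fun i => (hSx i).choose_spec.2
  -- card of S i is d
  have hcardS : ∀ i, (S i).ncard = d := by
    intro i
    obtain ⟨a, b, hab, hai, hbi⟩ := hpick i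
    rw [card_part_eq (hpart a) (hcomp i a (Ne.symm hai)) (hSmem i), hn a]
  -- intersections are {x}
  have hinter : ∀ i j : Fin k, i ≠ j → S i ∩ S j = {x} := by
    intro i j hij
    have h := hcomp i j hij (S i) (hSmem i) (S j) (hSmem j)
    ext y
    simp only [Set.mem_singleton_iff]
    constructor
    · intro hy
      exact (h.choose_spec.2 y hy).trans (h.choose_spec.2 x ⟨hxS i, hxS j⟩).symm
    · rintro rfl; exact ⟨hxS i, hxS j⟩
  -- count
  set F : Fin k → Finset X := fun i => ((S i) \ {x}).toFinset with hF
  have hFcard : ∀ i, (F i).card = d - 1 := by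
    intro i
    show (S i \ {x}).toFinset.card = d - 1
    rw [← Set.ncard_eq_toFinset_card', Set.ncard_diff_singleton_of_mem (hxS i), hcardS i]
  have hFdisj : ∀ i ∈ (Finset.univ : Finset (Fin k)), ∀ j ∈ Finset.univ, i ≠ j →
      Disjoint (F i) (F j) := by
    intro i _ j _ hij
    rw [Finset.disjoint_left]
    intro y hyi hyj
    simp only [hF, Set.mem_toFinset, Set.mem_diff, Set.mem_singleton_iff] at hyi hyj
    have : y ∈ S i ∩ S j := ⟨hyi.1, hyj.1⟩
    rw [hinter i j hij] at this
    exact hyi.2 this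
  have hsub : Finset.univ.biUnion F ⊆ Finset.univ.erase x := by
    intro y hy
    simp only [Finset.mem_biUnion] at hy
    obtain ⟨i, -, hyi⟩ := hy
    simp only [hF, Set.mem_toFinset, Set.mem_diff, Set.mem_singleton_iff] at hyi
    exact Finset.mem_erase.mpr ⟨hyi.2, Finset.mem_univ y⟩
  have hcount : k * (d - 1) ≤ d ^ 2 - 1 := by
    calc k * (d - 1) = ∑ i : Fin k, (F i).card := by
          simp [hFcard, Finset.sum_const, Finset.card_univ, mul_comm]
      _ = (Finset.univ.biUnion F).card := (Finset.card_biUnion hFdisj).symm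
      _ ≤ (Finset.univ.erase x).card := Finset.card_le_card hsub
      _ = d ^ 2 - 1 := by rw [Finset.card_erase_of_mem (Finset.mem_univ x),
            Finset.card_univ, hX]
  have heq : d ^ 2 - 1 = (d + 1) * (d - 1) := by
    obtain ⟨c, rfl⟩ : ∃ c, d = c + 1 := ⟨d - 1, by omega⟩
    have h1 : (c + 1) ^ 2 = (c + 2) * c + 1 := by ring
    simp [h1]
  rw [heq] at hcount
  exact Nat.le_of_mul_le_mul_right (by omega : k * (d-1) ≤ (d+1) * (d-1)) (by omega : 0 < d - 1)
end

section
/- Let d be a prime power. Then there exist d + 1 pairwise complementary partitions of a set with d² elements. (If d is a prime power, there are d + 1 mutually complementary classical structures on d² elements in Rel.) -/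
/-- The pencil of lines in `F × F` with slope `some m`, or vertical lines for `none`. -/
def pencil {F : Type*} [Field F] : Option F → Set (Set (F × F))
  | none => Set.range (fun c => {p : F × F | p.1 = c})
  | some m => Set.range (fun b => {p : F × F | p.2 = m * p.1 + b})

lemma isPartition_pencil {F : Type*} [Field F] (o : Option F) : IsPartition (pencil o) := by
  cases o with
  | none =>
    refine ⟨?_, ?_, ?_⟩
    · rintro S ⟨c, rfl⟩; exact ⟨(c, 0), rfl⟩
    · rintro S ⟨c, rfl⟩ T ⟨c', rfl⟩ hne
      rw [Set.disjoint_left]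
      rintro ⟨x, y⟩ hx hx'
      simp only [Set.mem_setOf_eq] at hx hx'
      exact hne (by subst hx; subst hx'; rfl)
    · ext ⟨x, y⟩
      simp only [Set.mem_univ, iff_true, Set.mem_sUnion]
      exact ⟨_, ⟨x, rfl⟩, rfl⟩
  | some m =>
    refine ⟨?_, ?_, ?_⟩
    · rintro S ⟨b, rfl⟩; exact ⟨(0, m * 0 + b), rfl⟩
    · rintro S ⟨b, rfl⟩ T ⟨b', rfl⟩ hne
      rw [Set.disjoint_left]
      rintro ⟨x, y⟩ hx hx'
      simp only [Set.mem_setOf_eq] at hx hx'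
      apply hne
      have : b = b' := by rw [hx] at hx'; linear_combination hx'
      rw [this]
    · ext ⟨x, y⟩
      simp only [Set.mem_univ, iff_true, Set.mem_sUnion]
      exact ⟨_, ⟨y - m * x, rfl⟩, by simp⟩

lemma complementary_vert_slope {F : Type*} [Field F] (m : F) :
    Complementary (pencil (none : Option F)) (pencil (some m)) := by
  rintro S ⟨c, rfl⟩ T ⟨b, rfl⟩
  refine ⟨(c, m * c + b), ⟨rfl, rfl⟩, ?_⟩
  rintro ⟨x, y⟩ ⟨h1, h2⟩
  simp only [Set.mem_setOf_eq] at h1 h2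
  subst h1; subst h2; rfl

lemma complementary_symm {X : Type*} {π τ : Set (Set X)} (h : Complementary π τ) :
    Complementary τ π := by
  intro S hS T hT
  obtain ⟨x, hx, hu⟩ := h T hT S hS
  exact ⟨x, ⟨hx.2, hx.1⟩, fun y hy => hu y ⟨hy.2, hy.1⟩⟩

lemma complementary_slope_slope {F : Type*} [Field F] {m m' : F} (h : m ≠ m') :
    Complementary (pencil (some m)) (pencil (some m')) := by
  rintro S ⟨b, rfl⟩ T ⟨b', rfl⟩
  have hne : m - m' ≠ 0 := sub_ne_zero.mpr h
  set x₀ := (b' - b) / (m - m') with hx₀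
  refine ⟨(x₀, m * x₀ + b), ⟨rfl, ?_⟩, ?_⟩
  · show m * x₀ + b = m' * x₀ + b'
    have key : x₀ * (m - m') = b' - b := by rw [hx₀, div_mul_cancel₀ _ hne]
    linear_combination key
  · rintro ⟨x, y⟩ ⟨h1, h2⟩
    simp only [Set.mem_setOf_eq] at h1 h2
    have hx : x = x₀ := by
      rw [h1] at h2
      have key : x₀ * (m - m') = b' - b := by rw [hx₀, div_mul_cancel₀ _ hne]
      apply mul_right_cancel₀ hne
      linear_combination h2 - key
    subst hx; subst h1; rfl

lemma isPartition_preimage {X Y : Type*} (e : X ≃ Y) {π : Set (Set Y)} (h : IsPartition π) :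
    IsPartition ((fun S => e ⁻¹' S) '' π) := by
  obtain ⟨h1, h2, h3⟩ := h
  refine ⟨?_, ?_, ?_⟩
  · rintro S ⟨S₀, hS₀, rfl⟩
    obtain ⟨y, hy⟩ := h1 S₀ hS₀
    exact ⟨e.symm y, by simp [hy]⟩
  · rintro S ⟨S₀, hS₀, rfl⟩ T ⟨T₀, hT₀, rfl⟩ hne
    have : S₀ ≠ T₀ := by rintro rfl; exact hne rfl
    exact Disjoint.preimage _ (h2 S₀ hS₀ T₀ hT₀ this)
  · ext x
    simp only [Set.mem_univ, iff_true, Set.mem_sUnion]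
    have : e x ∈ ⋃₀ π := by rw [h3]; trivial
    obtain ⟨S₀, hS₀, hx⟩ := this
    exact ⟨e ⁻¹' S₀, ⟨S₀, hS₀, rfl⟩, hx⟩

lemma complementary_preimage {X Y : Type*} (e : X ≃ Y) {π τ : Set (Set Y)}
    (h : Complementary π τ) :
    Complementary ((fun S => e ⁻¹' S) '' π) ((fun S => e ⁻¹' S) '' τ) := by
  rintro S ⟨S₀, hS₀, rfl⟩ T ⟨T₀, hT₀, rfl⟩
  obtain ⟨y, hy, hu⟩ := h S₀ hS₀ T₀ hT₀
  refine ⟨e.symm y, by simp [hy.1, hy.2], ?_⟩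
  intro x hx
  have := hu (e x) ⟨hx.1, hx.2⟩
  rw [← this]; simp

/-- If `d` is a prime power then there exist `d + 1` pairwise complementary partitions of
a set with `d²` elements; i.e. there are `d + 1` mutually complementary classical
structures on `d²` elements in `Rel`. -/
theorem mutually_complementary_partitions_of_prime_power {d : ℕ}
    (hd : ∃ p n : ℕ, Nat.Prime p ∧ 1 ≤ n ∧ d = p ^ n) :
    ∃ π : Fin (d + 1) → Set (Set (Fin (d ^ 2))),
      (∀ i, IsPartition (π i)) ∧ ∀ i j, i ≠ j → Complementary (π i) (π j) := by
  obtain ⟨p, n, hp, hn, rfl⟩ := hd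
  haveI : Fact (Nat.Prime p) := ⟨hp⟩
  set F := GaloisField p n with hF
  haveI : Fintype F := Fintype.ofFinite F
  have hcard : Fintype.card F = p ^ n := by
    rw [← Nat.card_eq_fintype_card]
    exact GaloisField.card p n (Nat.one_le_iff_ne_zero.mp hn)
  have hFF : Fintype.card (F × F) = (p ^ n) ^ 2 := by
    rw [Fintype.card_prod, hcard]; ring
  have hOpt : Fintype.card (Option F) = p ^ n + 1 := by
    rw [Fintype.card_option, hcard]
  let e : Fin ((p ^ n) ^ 2) ≃ F × F := (Fintype.equivFinOfCardEq hFF).symm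
  let e2 : Fin (p ^ n + 1) ≃ Option F := (Fintype.equivFinOfCardEq hOpt).symm
  refine ⟨fun i => (fun S => e ⁻¹' S) '' pencil (e2 i), ?_, ?_⟩
  · intro i; exact isPartition_preimage e (isPartition_pencil _)
  · intro i j hij
    have hne : e2 i ≠ e2 j := fun h => hij (e2.injective h)
    apply complementary_preimage
    rcases ho : e2 i with _ | m <;> rcases ho' : e2 j with _ | m'
    · exact absurd (ho ▸ ho' ▸ rfl : e2 i = e2 j) hne
    · exact complementary_vert_slope m'
    · exact complementary_symm (complementary_vert_slope m)
    · apply complementary_slope_slope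
      rintro rfl
      exact hne (ho.trans ho'.symm)
end

section
/- Let d ≥ 2 and suppose there exist k pairwise complementary partitions of a set with d² elements. Then there exist k orthonormal bases of the complex inner product space ℂ^(d²) (EuclideanSpace ℂ (Fin (d²))) that are pairwise mutually unbiased. (If there are k mutually complementary classical structures on d² elements in Rel, then there are k mutually unbiased bases in ℂ^(d²).) -/
lemma aux_part_unique {X : Type*} {π : Set (Set X)} (hπ : IsPartition π)
    {x : X} {S T : Set X} (hS : S ∈ π) (hT : T ∈ π) (hxS : x ∈ S) (hxT : x ∈ T) : S = T := by
  by_contra hne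
  exact Set.disjoint_left.mp (hπ.2.1 S hS T hT hne) hxS hxT

lemma aux_mem_part {X : Type*} {π : Set (Set X)} (hπ : IsPartition π) (x : X) :
    ∃ S ∈ π, x ∈ S := by
  have : x ∈ ⋃₀ π := hπ.2.2.symm ▸ Set.mem_univ x
  simpa using this

lemma aux_part_card {X : Type*} {π τ : Set (Set X)} (hτ : IsPartition τ)
    (hc : Complementary π τ) {S : Set X} (hS : S ∈ π) :
    Nat.card S = Nat.card τ := by
  refine (Nat.card_eq_of_bijective
    (fun T : τ => (⟨(hc S hS T T.2).choose, (hc S hS T T.2).choose_spec.1.1⟩ : S))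
    ⟨?_, ?_⟩).symm
  · intro T T' h
    have heq : (hc S hS T T.2).choose = (hc S hS T' T'.2).choose := Subtype.ext_iff.mp h
    have h1 : (hc S hS T T.2).choose ∈ (T : Set X) := (hc S hS T T.2).choose_spec.1.2
    have h2 : (hc S hS T' T'.2).choose ∈ (T' : Set X) := (hc S hS T' T'.2).choose_spec.1.2
    rw [← heq] at h2
    exact Subtype.ext (aux_part_unique hτ T.2 T'.2 h1 h2)
  · rintro ⟨x, hx⟩
    obtain ⟨T, hT, hxT⟩ := aux_mem_part hτ x
    exact ⟨⟨T, hT⟩, Subtype.ext ((hc S hS T hT).choose_spec.2 x ⟨hx, hxT⟩).symm⟩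

lemma aux_card_mul {X : Type*} [Fintype X] {π τ : Set (Set X)} (hπ : IsPartition π)
    (hτ : IsPartition τ) (hc : Complementary π τ) :
    Nat.card π * Nat.card τ = Fintype.card X := by
  classical
  have hbij : Function.Bijective (fun x : X =>
      ((⟨(aux_mem_part hπ x).choose, (aux_mem_part hπ x).choose_spec.1⟩,
        ⟨(aux_mem_part hτ x).choose, (aux_mem_part hτ x).choose_spec.1⟩) : π × τ)) := by
    constructor
    · intro x y hxy
      have h1 : (aux_mem_part hπ x).choose = (aux_mem_part hπ y).choose :=
        Subtype.ext_iff.mp (Prod.ext_iff.mp hxy).1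
      have h2 : (aux_mem_part hτ x).choose = (aux_mem_part hτ y).choose :=
        Subtype.ext_iff.mp (Prod.ext_iff.mp hxy).2
      obtain ⟨x₀, _, hu⟩ := hc _ (aux_mem_part hπ x).choose_spec.1 _
        (aux_mem_part hτ x).choose_spec.1
      have hy1 := (aux_mem_part hπ y).choose_spec.2
      have hy2 := (aux_mem_part hτ y).choose_spec.2
      rw [← h1] at hy1; rw [← h2] at hy2
      exact (hu x ⟨(aux_mem_part hπ x).choose_spec.2, (aux_mem_part hτ x).choose_spec.2⟩).trans
        (hu y ⟨hy1, hy2⟩).symm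
    · rintro ⟨⟨S, hS⟩, ⟨T, hT⟩⟩
      obtain ⟨x₀, ⟨hx₀S, hx₀T⟩, hu⟩ := hc S hS T hT
      refine ⟨x₀, Prod.ext (Subtype.ext ?_) (Subtype.ext ?_)⟩
      · exact aux_part_unique hπ (aux_mem_part hπ x₀).choose_spec.1 hS
          (aux_mem_part hπ x₀).choose_spec.2 hx₀S
      · exact aux_part_unique hτ (aux_mem_part hτ x₀).choose_spec.1 hT
          (aux_mem_part hτ x₀).choose_spec.2 hx₀T
  calc Nat.card π * Nat.card τ = Nat.card (π × τ) := (Nat.card_prod _ _).symm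
    _ = Nat.card X := (Nat.card_eq_of_bijective _ hbij).symm
    _ = Fintype.card X := Nat.card_eq_fintype_card


open Finset in
lemma aux_fourier_sum {m : ℕ} (hm : 0 < m) {ζ : ℂ} (hζ : IsPrimitiveRoot ζ m)
    (hζn : ‖ζ‖ = 1) (t t' : Fin m) :
    ∑ a : Fin m, (starRingEnd ℂ) (ζ ^ ((t : ℕ) * a)) * ζ ^ ((t' : ℕ) * a)
      = if t = t' then (m : ℂ) else 0 := by
  have hζ0 : ζ ≠ 0 := fun h => by simp [h] at hζn
  have hconj : ∀ n : ℕ, (starRingEnd ℂ) (ζ ^ n) = (ζ ^ n)⁻¹ := by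
    intro n
    rw [← Complex.inv_eq_conj]
    · simp [norm_pow, hζn]
  by_cases h : t = t'
  · subst h
    simp only [hconj, if_pos rfl]
    have : ∀ a : Fin m, (ζ ^ ((t : ℕ) * a))⁻¹ * ζ ^ ((t : ℕ) * a) = 1 := fun a =>
      inv_mul_cancel₀ (pow_ne_zero _ hζ0)
    simp [this]
  · rw [if_neg h]
    have hterm : ∀ a : Fin m, (starRingEnd ℂ) (ζ ^ ((t : ℕ) * a)) * ζ ^ ((t' : ℕ) * a)
        = (ζ ^ (((t' : ℤ) - (t : ℤ)))) ^ (a : ℕ) := by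
      intro a
      rw [hconj, ← zpow_natCast ζ ((t : ℕ) * a), ← zpow_natCast ζ ((t' : ℕ) * a), ← zpow_neg,
        ← zpow_add₀ hζ0, ← zpow_natCast (ζ ^ (((t' : ℤ) - (t : ℤ)))), ← zpow_mul]
      congr 1
      push_cast
      ring
    simp only [hterm]
    rw [Fin.sum_univ_eq_sum_range]
    set ξ : ℂ := ζ ^ (((t' : ℤ) - (t : ℤ))) with hξ
    have hξ1 : ξ ≠ 1 := by
      intro hc
      rw [hξ, hζ.zpow_eq_one_iff_dvd] at hc
      have := Int.eq_zero_of_abs_lt_dvd hc (by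
        have h1 : (t' : ℤ) < m := by exact_mod_cast t'.2
        have h2 : (t : ℤ) < m := by exact_mod_cast t.2
        have h3 : (0 : ℤ) ≤ t := by positivity
        have h4 : (0 : ℤ) ≤ t' := by positivity
        rw [abs_lt]; omega)
      apply h
      have : (t : ℤ) = t' := by omega
      exact Fin.ext (by exact_mod_cast this)
    have hgeom := geom_sum_mul ξ m
    have hξm : ξ ^ m = 1 := by
      rw [hξ, ← zpow_natCast, ← zpow_mul, mul_comm, zpow_mul, zpow_natCast, hζ.pow_eq_one,
        one_zpow]
    rw [hξm, sub_self] at hgeom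
    exact (mul_eq_zero.mp hgeom).resolve_right (sub_ne_zero_of_ne hξ1)


lemma aux_exists_onb {ι E : Type*} [Fintype ι] [Nonempty ι] [NormedAddCommGroup E]
    [InnerProductSpace ℂ E] [FiniteDimensional ℂ E] {v : ι → E} (h : Orthonormal ℂ v)
    (hc : Fintype.card ι = Module.finrank ℂ E) :
    ∃ b : OrthonormalBasis ι ℂ E, ⇑b = v := by
  refine ⟨OrthonormalBasis.mk h ?_, OrthonormalBasis.coe_mk _ _⟩
  have := (basisOfOrthonormalOfCardEqFinrank h hc).span_eq
  rw [coe_basisOfOrthonormalOfCardEqFinrank] at this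
  rw [this]

open Finset in
lemma aux_key {d k : ℕ} (hd : 2 ≤ d) (hk : 2 ≤ k) {X : Type*} [Fintype X]
    (hX : Fintype.card X = d ^ 2) (π : Fin k → Set (Set X)) (h1 : ∀ i, IsPartition (π i))
    (h2 : ∀ i j, i ≠ j → Complementary (π i) (π j)) :
    ∃ v : Fin k → Fin (d ^ 2) → EuclideanSpace ℂ X,
      (∀ i, Orthonormal ℂ (v i)) ∧ ∀ i j, i ≠ j → ∀ a b,
        ‖(inner ℂ (v i a) (v j b) : ℂ)‖ ^ 2 = 1 / (d ^ 2 : ℝ) := by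
  classical
  -- basic setup
  set D := d ^ 2 with hD
  have hD0 : 0 < D := by positivity
  -- a choice of a different index
  have hk1 : (1 : ℕ) < k := hk
  set other : Fin k → Fin k := fun i => if i = ⟨0, by omega⟩ then ⟨1, hk1⟩ else ⟨0, by omega⟩
    with hother
  have hother_ne : ∀ i, other i ≠ i := by
    intro i
    simp only [hother]
    split
    · rename_i h; rw [h]; simp [Fin.ext_iff]
    · rename_i h; exact fun hc => h hc.symm
  -- numbers of parts and part sizes
  set n : Fin k → ℕ := fun i => Nat.card (π i) with hn
  set m : Fin k → ℕ := fun i => Nat.card (π (other i)) with hm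
  have hmul : ∀ i j, i ≠ j → n i * n j = D := fun i j hij =>
    (aux_card_mul (h1 i) (h1 j) (h2 i j hij)).trans hX
  have hpartcard : ∀ i, ∀ S ∈ π i, Nat.card S = m i := by
    intro i S hS
    exact aux_part_card (h1 (other i)) (h2 i (other i) (hother_ne i).symm) hS
  have hnm : ∀ i, n i * m i = D := by
    intro i
    exact hmul i (other i) (fun hc => hother_ne i hc.symm)
  have hm0 : ∀ i, 0 < m i := by
    intro i
    rcases Nat.eq_zero_or_pos (m i) with h | h
    · exfalso; have := hnm i; rw [h, mul_zero] at this; omega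
    · exact h
  have hmm : ∀ i j, i ≠ j → m i * m j = D := by
    intro i j hij
    have h3 : n i * n j = D := hmul i j hij
    have h4 : m i * n i = D := by rw [mul_comm]; exact hnm i
    have h5 : m j * n j = D := by rw [mul_comm]; exact hnm j
    have : (m i * m j) * (n i * n j) = D * D := by
      calc (m i * m j) * (n i * n j) = (m i * n i) * (m j * n j) := by ring
        _ = D * D := by rw [h4, h5]
    rw [h3] at this
    exact Nat.eq_of_mul_eq_mul_right hD0 this
  -- enumerate each part
  have hScard : ∀ i, ∀ S : π i, Fintype.card S = m i := by
    intro i S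
    rw [← Nat.card_eq_fintype_card]
    exact hpartcard i S S.2
  set e : ∀ i, ∀ S : π i, (S : Set X) ≃ Fin (m i) :=
    fun i S => Fintype.equivFinOfCardEq (hScard i S) with he
  -- roots of unity
  set ζ : Fin k → ℂ := fun i => Complex.exp (2 * Real.pi * Complex.I / (m i)) with hζ
  have hζprim : ∀ i, IsPrimitiveRoot (ζ i) (m i) := fun i =>
    Complex.isPrimitiveRoot_exp _ (hm0 i).ne'
  have hζnorm : ∀ i, ‖ζ i‖ = 1 := by
    intro i
    have hrw : (2 * (Real.pi : ℂ) * Complex.I / (m i)) =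
        ((2 * Real.pi / (m i) : ℝ) : ℂ) * Complex.I := by
      push_cast; ring
    rw [hζ]
    simp only []
    rw [hrw, Complex.norm_exp_ofReal_mul_I]
  -- the basis vectors, indexed by part × Fourier index
  set w : ∀ i, (π i × Fin (m i)) → EuclideanSpace ℂ X := fun i p =>
    WithLp.toLp 2 (fun x => if h : x ∈ (p.1 : Set X)
      then (((Real.sqrt (m i) : ℝ) : ℂ))⁻¹ * ζ i ^ ((p.2 : ℕ) * (e i p.1 ⟨x, h⟩ : ℕ))
      else 0) with hw
  -- index equivalences
  have hidx : ∀ i, Fintype.card (π i × Fin (m i)) = D := by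
    intro i
    rw [Fintype.card_prod, Fintype.card_fin, ← Nat.card_eq_fintype_card]
    exact hnm i
  set E : ∀ i, Fin D ≃ (π i × Fin (m i)) := fun i => (Fintype.equivFinOfCardEq (hidx i)).symm
    with hE
  -- inner products as sums
  have hinner : ∀ (i j : Fin k) (p : π i × Fin (m i)) (q : π j × Fin (m j)),
      (inner ℂ (w i p) (w j q) : ℂ) = ∑ x : X, (starRingEnd ℂ) (w i p x) * w j q x := by
    intro i j p q
    simp only [PiLp.inner_apply, RCLike.inner_apply']
  -- normalization constants
  have hcc : ∀ i : Fin k, (((Real.sqrt (m i) : ℝ) : ℂ))⁻¹ * (((Real.sqrt (m i) : ℝ) : ℂ))⁻¹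
      = ((m i : ℝ) : ℂ)⁻¹ := by
    intro i
    rw [← mul_inv]
    norm_cast
    rw [Real.mul_self_sqrt (by positivity)]
  have hm0C : ∀ i : Fin k, ((m i : ℝ) : ℂ) ≠ 0 := by
    intro i
    exact_mod_cast Nat.cast_ne_zero.mpr (hm0 i).ne'
  -- orthonormality of each w i
  have horth : ∀ i, Orthonormal ℂ (w i) := by
    intro i
    rw [orthonormal_iff_ite]
    rintro ⟨S, t⟩ ⟨S', t'⟩
    rw [hinner]
    by_cases hSS : S = S'
    · subst hSS
      have hzero : ∀ x : X, x ∉ (S : Set X) →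
          (starRingEnd ℂ) (w i (S, t) x) * w i (S, t') x = 0 := by
        intro x hx
        simp only [hw, PiLp.toLp_apply, dif_neg hx, map_zero, zero_mul]
      rw [← Finset.sum_subset (Finset.subset_univ (Set.toFinset (S : Set X)))
        (fun x _ hx => hzero x (by simpa using hx))]
      rw [Finset.sum_subtype (Set.toFinset (S : Set X)) (fun x => Set.mem_toFinset)
        (fun x => (starRingEnd ℂ) (w i (S, t) x) * w i (S, t') x)]
      have hterm : ∀ y : (S : Set X),
          (starRingEnd ℂ) (w i (S, t) y) * w i (S, t') y
          = ((m i : ℝ) : ℂ)⁻¹ * ((starRingEnd ℂ) (ζ i ^ ((t : ℕ) * (e i S y : ℕ)))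
              * ζ i ^ ((t' : ℕ) * (e i S y : ℕ))) := by
        rintro ⟨y, hy⟩
        simp only [hw, PiLp.toLp_apply, dif_pos hy, map_mul, Complex.conj_ofReal, map_inv₀]
        rw [← hcc i]
        ring
      rw [Finset.sum_congr rfl (fun y _ => hterm y), ← Finset.mul_sum]
      have hre := Equiv.sum_comp (e i S) (fun a : Fin (m i) =>
        (starRingEnd ℂ) (ζ i ^ ((t : ℕ) * a)) * ζ i ^ ((t' : ℕ) * a))
      rw [hre, aux_fourier_sum (hm0 i) (hζprim i) (hζnorm i) t t']
      by_cases htt : t = t'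
      · subst htt
        have hne : ((m i : ℕ) : ℂ) ≠ 0 := Nat.cast_ne_zero.mpr (hm0 i).ne'
        simp [inv_mul_cancel₀ hne]
      · simp [htt, Prod.ext_iff]
    · have hdisj : Disjoint (S : Set X) (S' : Set X) :=
        (h1 i).2.1 S S.2 S' S'.2 (fun h => hSS (Subtype.ext h))
      have hzero : ∀ x : X, (starRingEnd ℂ) (w i (S, t) x) * w i (S', t') x = 0 := by
        intro x
        by_cases hxS : x ∈ (S : Set X)
        · have hxS' : x ∉ (S' : Set X) := fun hc => Set.disjoint_left.mp hdisj hxS hc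
          simp only [hw, PiLp.toLp_apply, dif_neg hxS', mul_zero]
        · simp only [hw, PiLp.toLp_apply, dif_neg hxS, map_zero, zero_mul]
      rw [Finset.sum_congr rfl (fun x _ => hzero x), Finset.sum_const_zero]
      have : ((S, t) : π i × Fin (m i)) ≠ (S', t') := fun h => hSS (congrArg Prod.fst h)
      simp [this]
  refine ⟨fun i => w i ∘ E i, fun i => (horth i).comp (E i) (E i).injective, ?_⟩
  -- cross unbiasedness
  intro i j hij a b
  simp only [Function.comp_apply]
  obtain ⟨S, t⟩ := E i a
  obtain ⟨T, s⟩ := E j b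
  obtain ⟨x₀, hx₀, hu⟩ := h2 i j hij S S.2 T T.2
  have hsum : (inner ℂ (w i (S, t)) (w j (T, s)) : ℂ)
      = (starRingEnd ℂ) (w i (S, t) x₀) * w j (T, s) x₀ := by
    rw [hinner]
    refine Finset.sum_eq_single x₀ (fun x _ hx => ?_) (fun hx => absurd (Finset.mem_univ x₀) hx)
    by_cases hxS : x ∈ (S : Set X)
    · by_cases hxT : x ∈ (T : Set X)
      · exact absurd (hu x ⟨hxS, hxT⟩) hx
      · simp only [hw, PiLp.toLp_apply, dif_neg hxT, mul_zero]
    · simp only [hw, PiLp.toLp_apply, dif_neg hxS, map_zero, zero_mul]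
  rw [hsum]
  simp only [hw, PiLp.toLp_apply, dif_pos hx₀.1, dif_pos hx₀.2, map_mul, norm_mul, RCLike.norm_conj, map_inv₀,
    Complex.conj_ofReal, norm_inv, Complex.norm_real, norm_pow, hζnorm i, hζnorm j, one_pow,
    mul_one, Real.norm_eq_abs]
  rw [abs_of_nonneg (Real.sqrt_nonneg _), abs_of_nonneg (Real.sqrt_nonneg _)]
  rw [mul_pow, ← Real.sqrt_inv, ← Real.sqrt_inv, Real.sq_sqrt (by positivity),
    Real.sq_sqrt (by positivity)]
  rw [← mul_inv, ← Nat.cast_mul, hmm i j hij]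
  rw [one_div]
  norm_cast


/-- If there are `k` mutually complementary classical structures on `d²` elements in
`Rel` (i.e. `k` pairwise complementary partitions of a set with `d²` elements), then
there are `k` pairwise mutually unbiased orthonormal bases of `ℂ^(d²)`: orthonormal bases
`B i` with `|⟨B i a, B j b⟩|² = 1 / d²` for all `i ≠ j` and all `a`, `b`. -/
theorem mubs_of_mutually_complementary_partitions {d k : ℕ} (hd : 2 ≤ d)
    {X : Type*} [Fintype X] (hX : Fintype.card X = d ^ 2)
    (hπ : ∃ π : Fin k → Set (Set X),
        (∀ i, IsPartition (π i)) ∧ ∀ i j, i ≠ j → Complementary (π i) (π j)) :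
    ∃ B : Fin k → OrthonormalBasis (Fin (d ^ 2)) ℂ (EuclideanSpace ℂ (Fin (d ^ 2))),
      ∀ i j, i ≠ j → ∀ a b : Fin (d ^ 2),
        ‖(inner ℂ (B i a) (B j b) : ℂ)‖ ^ 2 = 1 / (d ^ 2 : ℝ) := by
  classical
  by_cases hk : 2 ≤ k
  · obtain ⟨π, h1, h2⟩ := hπ
    obtain ⟨v, hon, hcross⟩ := aux_key hd hk hX π h1 h2
    haveI : Nonempty (Fin (d ^ 2)) := ⟨⟨0, by positivity⟩⟩
    have hrank : Fintype.card (Fin (d ^ 2)) = Module.finrank ℂ (EuclideanSpace ℂ X) := by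
      simp [finrank_euclideanSpace, hX]
    choose b hb using fun i => aux_exists_onb (hon i) hrank
    set L := LinearIsometryEquiv.piLpCongrLeft 2 ℂ ℂ (Fintype.equivFinOfCardEq hX) with hL
    refine ⟨fun i => (b i).map L, ?_⟩
    intro i j hij a a'
    rw [OrthonormalBasis.map_apply, OrthonormalBasis.map_apply,
      LinearIsometryEquiv.inner_map_map, hb i, hb j]
    exact hcross i j hij a a'
  · refine ⟨fun _ => EuclideanSpace.basisFun (Fin (d ^ 2)) ℂ, fun i j hij => ?_⟩
    exact absurd (Fin.ext (by omega : (i : ℕ) = j)) hij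
end

section
/- The map Φ from the direct product group Π i, G i to the permutation group of X = Σ i, G i defined by Φ(u)⟨i, g⟩ = ⟨i, (u i) * g⟩ is an injective group homomorphism, and a permutation of X lies in the image of Φ if and only if it is the bijection Λ(P) associated to some unbiased point P, i.e., the bijection x ↦ (the unique y with ∃ z ∈ P, δ y (x, z)) for some transversal P of the fibers. Hence the maps Λ(P) for unbiased points P form, under composition, a group isomorphic to the direct product of the groups G i. -/
/-- The group homomorphism `Φ` from `Π i, G i` to the permutations of `Σ i, G i`
sending `u` to the permutation `⟨i, g⟩ ↦ ⟨i, u i * g⟩`. -/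
def Phi {ι : Type*} (G : ι → Type*) [∀ i, CommGroup (G i)] :
    (∀ i, G i) →* Equiv.Perm (Σ i, G i) where
  toFun u := Equiv.sigmaCongrRight fun i => Equiv.mulLeft (u i)
  map_one' := by
    ext ⟨i, g⟩
    · rfl
    · apply heq_of_eq
      change 1 * g = g
      exact one_mul g
  map_mul' u v := by
    ext ⟨i, g⟩
    · rfl
    · apply heq_of_eq
      change u i * v i * g = u i * (v i * g)
      exact mul_assoc _ _ _

/-- `Φ : Π i, G i → Perm (Σ i, G i)`, `Φ(u)⟨i, g⟩ = ⟨i, u i * g⟩`, is an injective group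
homomorphism whose image consists exactly of the bijections `Λ(P)` associated to the
unbiased points `P` (the transversals of the fibers), namely the maps
`x ↦ (the unique y with ∃ z ∈ P, δ y (x, z))`.  Hence the maps `Λ(P)` for unbiased
points `P` form, under composition, a group isomorphic to `Π i, G i`. -/
theorem phi_injective_image_unbiased {ι : Type*} [Fintype ι] [Nonempty ι]
    (G : ι → Type*) [∀ i, Fintype (G i)] [∀ i, CommGroup (G i)] :
    (∀ (u : ∀ i, G i) (x : Σ i, G i), Phi G u x = ⟨x.1, u x.1 * x.2⟩) ∧
    Function.Injective (Phi G) ∧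
    (∀ σ : Equiv.Perm (Σ i, G i),
        σ ∈ (Phi G).range ↔
          ∃ P : Set (Σ i, G i),
            (∀ i, ∃! g : G i, (⟨i, g⟩ : Σ i, G i) ∈ P) ∧
            ∀ x y : Σ i, G i, σ x = y ↔ ∃ z ∈ P, relDelta y (x, z)) ∧
    Nonempty ((∀ i, G i) ≃* (Phi G).range) := by
  have hPhi : ∀ (u : ∀ i, G i) (x : Σ i, G i), Phi G u x = ⟨x.1, u x.1 * x.2⟩ := by
    rintro u ⟨i, g⟩; rfl
  have hinj : Function.Injective (Phi G) := by
    intro u v h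
    funext i
    have h1 : Phi G u ⟨i, 1⟩ = Phi G v ⟨i, 1⟩ := by rw [h]
    rw [hPhi, hPhi] at h1
    simpa using h1
  refine ⟨hPhi, hinj, ?_, ⟨MonoidHom.ofInjective hinj⟩⟩
  intro σ
  constructor
  · rintro ⟨u, rfl⟩
    refine ⟨{x | x.2 = u x.1}, fun i => ⟨u i, rfl, fun g hg => hg⟩, ?_⟩
    rintro ⟨i, g⟩ ⟨j, h⟩
    rw [hPhi]
    constructor
    · intro hxy
      injection hxy with h1 h2
      subst h1
      have h2' : u i * g = h := eq_of_heq h2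
      subst h2'
      exact ⟨⟨i, u i⟩, rfl, g, u i, rfl, rfl, mul_comm _ _⟩
    · rintro ⟨z, hz, a, b, hx, rfl, hy⟩
      injection hx with h1 h2
      subst h1
      have h2' : g = a := eq_of_heq h2
      subst h2'
      have hb : b = u i := hz
      subst hb
      have hy' : h = g * u i := hy
      rw [hy', mul_comm]
  · rintro ⟨P, hP, hσ⟩
    refine ⟨fun i => (hP i).choose, ?_⟩
    refine Equiv.ext fun x => ?_
    rw [hPhi]
    refine ((hσ x ⟨x.1, (hP x.1).choose * x.2⟩).mpr ?_).symm
    obtain ⟨i, g⟩ := x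
    exact ⟨⟨i, (hP i).choose⟩, (hP i).choose_spec.1, g, (hP i).choose, rfl, rfl, mul_comm _ _⟩
end
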